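/- For any square-summable u : ℤ×ℤ → ℝ, the following three identities hold: (i) ‖D₁,₀ u‖²_{ℓ²(ℤ²)} = ‖D₁₊ u‖²_{ℓ²(ℤ²)} − (1/4)‖Δ₁ u‖²_{ℓ²(ℤ²)}; (ii) ‖D₂,₀ u‖²_{ℓ²(ℤ²)} = ‖D₂₊ u‖²_{ℓ²(ℤ²)} − (1/4)‖Δ₂ u‖²_{ℓ²(ℤ²)}; (iii) ‖D₁,₀ D₂,₀ u‖²_{ℓ²(ℤ²)} = ‖D₁₊ D₂₊ u‖²_{ℓ²(ℤ²)} − (1/4)‖D₁₊ Δ₂ u‖²_{ℓ²(ℤ²)} − (1/4)‖D₂₊ Δ₁ u‖²_{ℓ²(ℤ²)} + (1/16)‖Δ₁ Δ₂ u‖²_{ℓ²(ℤ²)}. -/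

import Mathlib

noncomputable section

/-- Forward difference in the first variable. -/
def D1p (u : ℤ → ℤ → ℝ) : ℤ → ℤ → ℝ := fun j k => u (j + 1) k - u j k
/-- Backward difference in the first variable. -/
def D1m (u : ℤ → ℤ → ℝ) : ℤ → ℤ → ℝ := fun j k => u j k - u (j - 1) k
/-- Forward difference in the second variable. -/
def D2p (u : ℤ → ℤ → ℝ) : ℤ → ℤ → ℝ := fun j k => u j (k + 1) - u j k
/-- Backward difference in the second variable. -/
def D2m (u : ℤ → ℤ → ℝ) : ℤ → ℤ → ℝ := fun j k => u j k - u j (k - 1)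
/-- Centered difference in the first variable. -/
def D10 (u : ℤ → ℤ → ℝ) : ℤ → ℤ → ℝ := fun j k => (D1p u j k + D1m u j k) / 2
/-- Centered difference in the second variable. -/
def D20 (u : ℤ → ℤ → ℝ) : ℤ → ℤ → ℝ := fun j k => (D2p u j k + D2m u j k) / 2
/-- Discrete Laplacian in the first variable. -/
def L1 (u : ℤ → ℤ → ℝ) : ℤ → ℤ → ℝ := D1p (D1m u)
/-- Discrete Laplacian in the second variable. -/
def L2 (u : ℤ → ℤ → ℝ) : ℤ → ℤ → ℝ := D2p (D2m u)

/-- Squared ℓ²(ℤ²) norm. -/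
def sqZ (u : ℤ → ℤ → ℝ) : ℝ := ∑' p : ℤ × ℤ, (u p.1 p.2) ^ 2
/-- ℓ²(ℤ²) scalar product. -/
def ipZ (u v : ℤ → ℤ → ℝ) : ℝ := ∑' p : ℤ × ℤ, u p.1 p.2 * v p.1 p.2

/-- Squared ℓ²(𝓘) norm over the interior indices 𝓘 = ℕ × ℤ of the half-space grid. -/
def sqH (u : ℤ → ℤ → ℝ) : ℝ := ∑' p : ℕ × ℤ, (u (p.1 : ℤ) p.2) ^ 2
/-- ℓ²(𝓘) scalar product over the interior indices 𝓘 = ℕ × ℤ. -/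
def ipH (u v : ℤ → ℤ → ℝ) : ℝ := ∑' p : ℕ × ℤ, u (p.1 : ℤ) p.2 * v (p.1 : ℤ) p.2
/-- Membership in ℋ : square-summable on the half-space grid and satisfying the
extrapolation (Neumann) boundary condition `u (-1) k = u 0 k`. -/
def memH (u : ℤ → ℤ → ℝ) : Prop :=
  (∀ k : ℤ, u (-1) k = u 0 k) ∧ Summable (fun p : ℕ × ℤ => (u (p.1 : ℤ) p.2) ^ 2)

/-- Squared ℓ²(𝔦) norm over the interior indices 𝔦 = ℕ × ℕ of the quarter-space grid. -/
def sqQ (u : ℤ → ℤ → ℝ) : ℝ := ∑' p : ℕ × ℕ, (u (p.1 : ℤ) (p.2 : ℤ)) ^ 2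
/-- ℓ²(𝔦) scalar product over the interior indices 𝔦 = ℕ × ℕ. -/
def ipQ (u v : ℤ → ℤ → ℝ) : ℝ :=
  ∑' p : ℕ × ℕ, u (p.1 : ℤ) (p.2 : ℤ) * v (p.1 : ℤ) (p.2 : ℤ)
/-- Membership in 𝔥 : square-summable on the quarter-space grid, satisfying the
extrapolation boundary conditions on both sides and the corner condition. -/
def memQ (u : ℤ → ℤ → ℝ) : Prop :=
  (∀ k : ℤ, -1 ≤ k → u (-1) k = u 0 k) ∧ (∀ j : ℤ, 0 ≤ j → u j (-1) = u j 0) ∧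
    Summable (fun p : ℕ × ℕ => (u (p.1 : ℤ) (p.2 : ℤ)) ^ 2)

/-- The skew-selfadjoint part `v` in the decomposition of the Lax-Wendroff scheme. -/
def vop (α β : ℝ) (u : ℤ → ℤ → ℝ) : ℤ → ℤ → ℝ :=
  fun j k => -α * D10 u j k - β * D20 u j k
/-- The selfadjoint part `w` in the decomposition of the Lax-Wendroff scheme. -/
def wop (α β : ℝ) (u : ℤ → ℤ → ℝ) : ℤ → ℤ → ℝ :=
  fun j k => -(α ^ 2 / 2) * L1 u j k - (β ^ 2 / 2) * L2 u j k
    - α * β * D10 (D20 u) j k + ((α ^ 2 + β ^ 2) / 8) * L1 (L2 u) j k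


section Helpers

lemma tsum_shift' (f : ℤ × ℤ → ℝ) (a b : ℤ) :
    ∑' p : ℤ × ℤ, f (p.1 + a, p.2 + b) = ∑' p : ℤ × ℤ, f p := by
  have := ((Equiv.addRight a).prodCongr (Equiv.addRight b)).tsum_eq f
  simpa [Equiv.prodCongr, Prod.map, Function.comp_def] using this

lemma summable_shift' (f : ℤ × ℤ → ℝ) (hf : Summable f) (a b : ℤ) :
    Summable (fun p : ℤ × ℤ => f (p.1 + a, p.2 + b)) := by
  have := (((Equiv.addRight a).prodCongr (Equiv.addRight b)).summable_iff (f := f)).2 hf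
  simpa [Equiv.prodCongr, Prod.map, Function.comp_def] using this

lemma summable_mul_sq' {f g : ℤ × ℤ → ℝ} (hf : Summable fun p => f p ^ 2)
    (hg : Summable fun p => g p ^ 2) : Summable fun p => f p * g p := by
  apply Summable.of_abs
  apply Summable.of_nonneg_of_le (fun p => abs_nonneg _)
    (fun p => ?_) ((hf.add hg).div_const 2)
  rw [abs_mul]
  nlinarith [sq_abs (f p), sq_abs (g p), sq_nonneg (|f p| - |g p|)]

lemma summable_sq_sub' {f g : ℤ × ℤ → ℝ} (hf : Summable fun p => f p ^ 2)
    (hg : Summable fun p => g p ^ 2) : Summable fun p => (f p - g p) ^ 2 := by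
  have h := (hf.add hg).sub ((summable_mul_sq' hf hg).mul_left 2)
  have E : (fun p : ℤ × ℤ => (f p - g p) ^ 2)
      = fun p => f p ^ 2 + g p ^ 2 - 2 * (f p * g p) := funext fun p => by ring
  rw [E]; exact h

lemma lemA' (a : ℤ × ℤ → ℝ) (ha : Summable fun p => a p ^ 2) (c d : ℤ) :
    ∑' p : ℤ × ℤ, ((a p + a (p.1 + c, p.2 + d)) / 2) ^ 2
      = (∑' p : ℤ × ℤ, a p ^ 2)
        - (1 / 4) * ∑' p : ℤ × ℤ, (a p - a (p.1 + c, p.2 + d)) ^ 2 := by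
  have hs2 : Summable fun p : ℤ × ℤ => a (p.1 + c, p.2 + d) ^ 2 :=
    summable_shift' (fun p => a p ^ 2) ha c d
  have hts : (∑' p : ℤ × ℤ, a (p.1 + c, p.2 + d) ^ 2) = ∑' p : ℤ × ℤ, a p ^ 2 :=
    tsum_shift' (fun p => a p ^ 2) c d
  have hm : Summable fun p : ℤ × ℤ => a p * a (p.1 + c, p.2 + d) :=
    summable_mul_sq' ha hs2
  have H1 : HasSum (fun p : ℤ × ℤ => (1/4) * a p ^ 2 + (1/4) * a (p.1 + c, p.2 + d) ^ 2
        + (1/2) * (a p * a (p.1 + c, p.2 + d)))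
      ((1/4) * (∑' p : ℤ × ℤ, a p ^ 2) + (1/4) * (∑' p : ℤ × ℤ, a (p.1 + c, p.2 + d) ^ 2)
        + (1/2) * (∑' p : ℤ × ℤ, a p * a (p.1 + c, p.2 + d))) :=
    ((ha.hasSum.mul_left _).add (hs2.hasSum.mul_left _)).add (hm.hasSum.mul_left _)
  have H2 : HasSum (fun p : ℤ × ℤ => a p ^ 2 + a (p.1 + c, p.2 + d) ^ 2
        - 2 * (a p * a (p.1 + c, p.2 + d)))
      ((∑' p : ℤ × ℤ, a p ^ 2) + (∑' p : ℤ × ℤ, a (p.1 + c, p.2 + d) ^ 2)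
        - 2 * (∑' p : ℤ × ℤ, a p * a (p.1 + c, p.2 + d))) :=
    (ha.hasSum.add hs2.hasSum).sub (hm.hasSum.mul_left _)
  have E1 : (fun p : ℤ × ℤ => ((a p + a (p.1 + c, p.2 + d)) / 2) ^ 2)
      = fun p : ℤ × ℤ => (1/4) * a p ^ 2 + (1/4) * a (p.1 + c, p.2 + d) ^ 2
        + (1/2) * (a p * a (p.1 + c, p.2 + d)) := funext fun p => by ring
  have E2 : (fun p : ℤ × ℤ => (a p - a (p.1 + c, p.2 + d)) ^ 2)
      = fun p : ℤ × ℤ => a p ^ 2 + a (p.1 + c, p.2 + d) ^ 2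
        - 2 * (a p * a (p.1 + c, p.2 + d)) := funext fun p => by ring
  rw [E1, H1.tsum_eq, E2, H2.tsum_eq, hts]
  ring

lemma lemB' (x y z w : ℤ × ℤ → ℝ) (c d : ℤ) (hx : Summable fun p => x p ^ 2)
    (hy : ∀ p : ℤ × ℤ, y p = x (p.1 + c, p.2))
    (hz : ∀ p : ℤ × ℤ, z p = x (p.1, p.2 + d))
    (hw : ∀ p : ℤ × ℤ, w p = x (p.1 + c, p.2 + d)) :
    ∑' p : ℤ × ℤ, ((x p + y p + z p + w p) / 4) ^ 2
      = (∑' p : ℤ × ℤ, x p ^ 2)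
        - (1 / 4) * (∑' p : ℤ × ℤ, (x p - z p) ^ 2)
        - (1 / 4) * (∑' p : ℤ × ℤ, (x p - y p) ^ 2)
        + (1 / 16) * (∑' p : ℤ × ℤ, (x p - y p - z p + w p) ^ 2) := by
  have hy2 : Summable fun p : ℤ × ℤ => y p ^ 2 := by
    simp only [hy]; simpa using summable_shift' (fun p => x p ^ 2) hx c 0
  have hz2 : Summable fun p : ℤ × ℤ => z p ^ 2 := by
    simp only [hz]; simpa using summable_shift' (fun p => x p ^ 2) hx 0 d
  have hw2 : Summable fun p : ℤ × ℤ => w p ^ 2 := by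
    simp only [hw]; simpa using summable_shift' (fun p => x p ^ 2) hx c d
  have ty : (∑' p : ℤ × ℤ, y p ^ 2) = ∑' p : ℤ × ℤ, x p ^ 2 := by
    simp only [hy]; simpa using tsum_shift' (fun p => x p ^ 2) c 0
  have tz : (∑' p : ℤ × ℤ, z p ^ 2) = ∑' p : ℤ × ℤ, x p ^ 2 := by
    simp only [hz]; simpa using tsum_shift' (fun p => x p ^ 2) 0 d
  have tw : (∑' p : ℤ × ℤ, w p ^ 2) = ∑' p : ℤ × ℤ, x p ^ 2 := by
    simp only [hw]; simpa using tsum_shift' (fun p => x p ^ 2) c d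
  have mxy : Summable fun p : ℤ × ℤ => x p * y p := summable_mul_sq' hx hy2
  have mxz : Summable fun p : ℤ × ℤ => x p * z p := summable_mul_sq' hx hz2
  have mxw : Summable fun p : ℤ × ℤ => x p * w p := summable_mul_sq' hx hw2
  have myz : Summable fun p : ℤ × ℤ => y p * z p := summable_mul_sq' hy2 hz2
  have myw : Summable fun p : ℤ × ℤ => y p * w p := summable_mul_sq' hy2 hw2
  have mzw : Summable fun p : ℤ × ℤ => z p * w p := summable_mul_sq' hz2 hw2
  have tyw : (∑' p : ℤ × ℤ, y p * w p) = ∑' p : ℤ × ℤ, x p * z p := by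
    simp only [hy, hw, hz]
    simpa using tsum_shift' (fun q => x q * x (q.1, q.2 + d)) c 0
  have tzw : (∑' p : ℤ × ℤ, z p * w p) = ∑' p : ℤ × ℤ, x p * y p := by
    simp only [hy, hz, hw]
    simpa using tsum_shift' (fun q => x q * x (q.1 + c, q.2)) 0 d
  have E1 : (fun p : ℤ × ℤ => ((x p + y p + z p + w p) / 4) ^ 2)
      = fun p : ℤ × ℤ => (1/16) * x p ^ 2 + (1/16) * y p ^ 2 + (1/16) * z p ^ 2
        + (1/16) * w p ^ 2 + (1/8) * (x p * y p) + (1/8) * (x p * z p)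
        + (1/8) * (x p * w p) + (1/8) * (y p * z p) + (1/8) * (y p * w p)
        + (1/8) * (z p * w p) := funext fun p => by ring
  have H1 : HasSum (fun p : ℤ × ℤ => (1/16) * x p ^ 2 + (1/16) * y p ^ 2 + (1/16) * z p ^ 2
        + (1/16) * w p ^ 2 + (1/8) * (x p * y p) + (1/8) * (x p * z p)
        + (1/8) * (x p * w p) + (1/8) * (y p * z p) + (1/8) * (y p * w p)
        + (1/8) * (z p * w p))
      ((1/16) * (∑' p : ℤ × ℤ, x p ^ 2) + (1/16) * (∑' p : ℤ × ℤ, y p ^ 2)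
        + (1/16) * (∑' p : ℤ × ℤ, z p ^ 2) + (1/16) * (∑' p : ℤ × ℤ, w p ^ 2)
        + (1/8) * (∑' p : ℤ × ℤ, x p * y p) + (1/8) * (∑' p : ℤ × ℤ, x p * z p)
        + (1/8) * (∑' p : ℤ × ℤ, x p * w p) + (1/8) * (∑' p : ℤ × ℤ, y p * z p)
        + (1/8) * (∑' p : ℤ × ℤ, y p * w p) + (1/8) * (∑' p : ℤ × ℤ, z p * w p)) :=
    (((((((((hx.hasSum.mul_left _).add (hy2.hasSum.mul_left _)).add
      (hz2.hasSum.mul_left _)).add (hw2.hasSum.mul_left _)).add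
      (mxy.hasSum.mul_left _)).add (mxz.hasSum.mul_left _)).add
      (mxw.hasSum.mul_left _)).add (myz.hasSum.mul_left _)).add
      (myw.hasSum.mul_left _)).add (mzw.hasSum.mul_left _)
  have E2 : (fun p : ℤ × ℤ => (x p - z p) ^ 2)
      = fun p : ℤ × ℤ => x p ^ 2 + z p ^ 2 - 2 * (x p * z p) := funext fun p => by ring
  have H2 : HasSum (fun p : ℤ × ℤ => x p ^ 2 + z p ^ 2 - 2 * (x p * z p))
      ((∑' p : ℤ × ℤ, x p ^ 2) + (∑' p : ℤ × ℤ, z p ^ 2)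
        - 2 * (∑' p : ℤ × ℤ, x p * z p)) :=
    (hx.hasSum.add hz2.hasSum).sub (mxz.hasSum.mul_left _)
  have E3 : (fun p : ℤ × ℤ => (x p - y p) ^ 2)
      = fun p : ℤ × ℤ => x p ^ 2 + y p ^ 2 - 2 * (x p * y p) := funext fun p => by ring
  have H3 : HasSum (fun p : ℤ × ℤ => x p ^ 2 + y p ^ 2 - 2 * (x p * y p))
      ((∑' p : ℤ × ℤ, x p ^ 2) + (∑' p : ℤ × ℤ, y p ^ 2)
        - 2 * (∑' p : ℤ × ℤ, x p * y p)) :=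
    (hx.hasSum.add hy2.hasSum).sub (mxy.hasSum.mul_left _)
  have E4 : (fun p : ℤ × ℤ => (x p - y p - z p + w p) ^ 2)
      = fun p : ℤ × ℤ => x p ^ 2 + y p ^ 2 + z p ^ 2 + w p ^ 2
        - 2 * (x p * y p) - 2 * (x p * z p) + 2 * (x p * w p) + 2 * (y p * z p)
        - 2 * (y p * w p) - 2 * (z p * w p) := funext fun p => by ring
  have H4 : HasSum (fun p : ℤ × ℤ => x p ^ 2 + y p ^ 2 + z p ^ 2 + w p ^ 2
        - 2 * (x p * y p) - 2 * (x p * z p) + 2 * (x p * w p) + 2 * (y p * z p)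
        - 2 * (y p * w p) - 2 * (z p * w p))
      ((∑' p : ℤ × ℤ, x p ^ 2) + (∑' p : ℤ × ℤ, y p ^ 2) + (∑' p : ℤ × ℤ, z p ^ 2)
        + (∑' p : ℤ × ℤ, w p ^ 2) - 2 * (∑' p : ℤ × ℤ, x p * y p)
        - 2 * (∑' p : ℤ × ℤ, x p * z p) + 2 * (∑' p : ℤ × ℤ, x p * w p)
        + 2 * (∑' p : ℤ × ℤ, y p * z p) - 2 * (∑' p : ℤ × ℤ, y p * w p)
        - 2 * (∑' p : ℤ × ℤ, z p * w p)) :=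
    ((((((((hx.hasSum.add hy2.hasSum).add hz2.hasSum).add hw2.hasSum).sub
      (mxy.hasSum.mul_left _)).sub (mxz.hasSum.mul_left _)).add
      (mxw.hasSum.mul_left _)).add (myz.hasSum.mul_left _)).sub
      (myw.hasSum.mul_left _)).sub (mzw.hasSum.mul_left _)
  rw [E1, H1.tsum_eq, E2, H2.tsum_eq, E3, H3.tsum_eq, E4, H4.tsum_eq, ty, tz, tw, tyw, tzw]
  ring

end Helpers

/-- Lemma 2: the three discrete product identities in ℓ²(ℤ²). -/
theorem lax_wendroff_lemma2 (u : ℤ → ℤ → ℝ)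
    (hu : Summable fun p : ℤ × ℤ => (u p.1 p.2) ^ 2) :
    sqZ (D10 u) = sqZ (D1p u) - (1 / 4) * sqZ (L1 u) ∧
    sqZ (D20 u) = sqZ (D2p u) - (1 / 4) * sqZ (L2 u) ∧
    sqZ (D10 (D20 u)) = sqZ (D1p (D2p u)) - (1 / 4) * sqZ (D1p (L2 u))
      - (1 / 4) * sqZ (D2p (L1 u)) + (1 / 16) * sqZ (L1 (L2 u)) := by
  refine ⟨?_, ?_, ?_⟩
  · -- part (i)
    set a : ℤ × ℤ → ℝ := fun p => u (p.1 + 1) p.2 - u p.1 p.2 with ha_def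
    have ha : Summable fun p : ℤ × ℤ => a p ^ 2 :=
      summable_sq_sub' (f := fun p : ℤ × ℤ => u (p.1 + 1) p.2)
        (by simpa using summable_shift' (fun p => (u p.1 p.2) ^ 2) hu 1 0) hu
    have key := lemA' a ha (-1) 0
    have e1 : (fun p : ℤ × ℤ => (D10 u p.1 p.2) ^ 2)
        = fun p : ℤ × ℤ => ((a p + a (p.1 + -1, p.2 + 0)) / 2) ^ 2 := by
      funext p
      simp only [ha_def, D10, D1p, D1m]
      ring_nf
    have e2 : (fun p : ℤ × ℤ => (L1 u p.1 p.2) ^ 2)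
        = fun p : ℤ × ℤ => (a p - a (p.1 + -1, p.2 + 0)) ^ 2 := by
      funext p
      simp only [ha_def, L1, D1p, D1m]
      ring_nf
    have e3 : (fun p : ℤ × ℤ => (D1p u p.1 p.2) ^ 2) = fun p : ℤ × ℤ => a p ^ 2 := rfl
    unfold sqZ
    rw [e1, e2, e3, key]
  · -- part (ii)
    set a : ℤ × ℤ → ℝ := fun p => u p.1 (p.2 + 1) - u p.1 p.2 with ha_def
    have ha : Summable fun p : ℤ × ℤ => a p ^ 2 :=
      summable_sq_sub' (f := fun p : ℤ × ℤ => u p.1 (p.2 + 1))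
        (by simpa using summable_shift' (fun p => (u p.1 p.2) ^ 2) hu 0 1) hu
    have key := lemA' a ha 0 (-1)
    have e1 : (fun p : ℤ × ℤ => (D20 u p.1 p.2) ^ 2)
        = fun p : ℤ × ℤ => ((a p + a (p.1 + 0, p.2 + -1)) / 2) ^ 2 := by
      funext p
      simp only [ha_def, D20, D2p, D2m]
      ring_nf
    have e2 : (fun p : ℤ × ℤ => (L2 u p.1 p.2) ^ 2)
        = fun p : ℤ × ℤ => (a p - a (p.1 + 0, p.2 + -1)) ^ 2 := by
      funext p
      simp only [ha_def, L2, D2p, D2m]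
      ring_nf
    have e3 : (fun p : ℤ × ℤ => (D2p u p.1 p.2) ^ 2) = fun p : ℤ × ℤ => a p ^ 2 := rfl
    unfold sqZ
    rw [e1, e2, e3, key]
  · -- part (iii)
    set b : ℤ × ℤ → ℝ := fun p =>
      (u (p.1 + 1) (p.2 + 1) - u (p.1 + 1) p.2) - (u p.1 (p.2 + 1) - u p.1 p.2) with hb_def
    have hb : Summable fun p : ℤ × ℤ => b p ^ 2 := by
      apply summable_sq_sub' (f := fun p : ℤ × ℤ => u (p.1 + 1) (p.2 + 1) - u (p.1 + 1) p.2)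
        (g := fun p : ℤ × ℤ => u p.1 (p.2 + 1) - u p.1 p.2)
      · exact summable_sq_sub' (f := fun p : ℤ × ℤ => u (p.1 + 1) (p.2 + 1))
          (g := fun p : ℤ × ℤ => u (p.1 + 1) p.2)
          (by simpa using summable_shift' (fun p => (u p.1 p.2) ^ 2) hu 1 1)
          (by simpa using summable_shift' (fun p => (u p.1 p.2) ^ 2) hu 1 0)
      · exact summable_sq_sub' (f := fun p : ℤ × ℤ => u p.1 (p.2 + 1))
          (by simpa using summable_shift' (fun p => (u p.1 p.2) ^ 2) hu 0 1) hu
    have key := lemB' b (fun p => b (p.1 + -1, p.2)) (fun p => b (p.1, p.2 + -1))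
      (fun p => b (p.1 + -1, p.2 + -1)) (-1) (-1) hb
      (fun _ => rfl) (fun _ => rfl) (fun _ => rfl)
    beta_reduce at key
    have e1 : (fun p : ℤ × ℤ => (D10 (D20 u) p.1 p.2) ^ 2)
        = fun p : ℤ × ℤ => ((b p + b (p.1 + -1, p.2) + b (p.1, p.2 + -1)
            + b (p.1 + -1, p.2 + -1)) / 4) ^ 2 := by
      funext p
      simp only [hb_def, D10, D20, D1p, D1m, D2p, D2m]
      ring_nf
    have e2 : (fun p : ℤ × ℤ => (D1p (L2 u) p.1 p.2) ^ 2)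
        = fun p : ℤ × ℤ => (b p - b (p.1, p.2 + -1)) ^ 2 := by
      funext p
      simp only [hb_def, L2, D1p, D2p, D2m]
      ring_nf
    have e3 : (fun p : ℤ × ℤ => (D2p (L1 u) p.1 p.2) ^ 2)
        = fun p : ℤ × ℤ => (b p - b (p.1 + -1, p.2)) ^ 2 := by
      funext p
      simp only [hb_def, L1, D2p, D1p, D1m]
      ring_nf
    have e4 : (fun p : ℤ × ℤ => (L1 (L2 u) p.1 p.2) ^ 2)
        = fun p : ℤ × ℤ => (b p - b (p.1 + -1, p.2) - b (p.1, p.2 + -1)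
            + b (p.1 + -1, p.2 + -1)) ^ 2 := by
      funext p
      simp only [hb_def, L1, L2, D1p, D1m, D2p, D2m]
      ring_nf
    have e5 : (fun p : ℤ × ℤ => (D1p (D2p u) p.1 p.2) ^ 2)
        = fun p : ℤ × ℤ => b p ^ 2 := rfl
    unfold sqZ
    rw [e1, e2, e3, e4, e5, key]
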